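/- Let X be an absolutely continuous nonnegative random variable with pdf f and cdf F with F(x) > 0 for all x > 0. Define τ_n(x) = f_n(x)/F_n(x) where f_1 = f, F_1 = F, T_n(x) = −log F_n(x), F_{n+1}(x) = F_n(x)(1 + T_n(x)), f_{n+1}(x) = T_n(x)·f_n(x). Then for every n ≥ 1, the ratio τ_{n+1}(x)/τ_n(x) equals T_n(x)/(1 + T_n(x)) and is decreasing in x > 0; consequently X_n ≥_RRH X_{n+1}, i.e. X_{n+1} is smaller than X_n in the relative reversed hazard rate order. -/

import Mathlib

open MeasureTheory Set Filter

private lemma g_mono : MonotoneOn (fun t : ℝ => t * (1 - Real.log t)) (Set.Ioc 0 1) := by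
  have hconv : Convex ℝ (Set.Ioc (0:ℝ) 1) := convex_Ioc 0 1
  have hcont : ContinuousOn (fun t : ℝ => t * (1 - Real.log t)) (Set.Ioc 0 1) := by
    apply ContinuousOn.mul continuousOn_id
    apply ContinuousOn.sub continuousOn_const
    exact Real.continuousOn_log.mono (fun t ht => ne_of_gt ht.1)
  have hd : ∀ t : ℝ, 0 < t → HasDerivAt (fun t : ℝ => t * (1 - Real.log t)) (-Real.log t) t := by
    intro t ht0
    have h1 : HasDerivAt (fun t : ℝ => t * (1 - Real.log t))
        (1 * (1 - Real.log t) + t * (0 - t⁻¹)) t :=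
      (hasDerivAt_id t).mul ((hasDerivAt_const t (1:ℝ)).sub (Real.hasDerivAt_log (ne_of_gt ht0)))
    convert h1 using 1
    have : t * (0 - t⁻¹) = -1 := by field_simp; ring
    rw [this]; ring
  apply monotoneOn_of_deriv_nonneg hconv hcont
  · intro t ht
    rw [interior_Ioc] at ht
    exact (hd t ht.1).differentiableAt.differentiableWithinAt
  · intro t ht
    rw [interior_Ioc] at ht
    rw [(hd t ht.1).deriv]
    simp only [neg_nonneg]
    exact Real.log_nonpos ht.1.le ht.2.le

theorem seq_relative_reversed_hazard
    (F f : ℝ → ℝ) (Fn fn : ℕ → ℝ → ℝ)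
    (hfpos : ∀ x, 0 < x → 0 < f x)
    (hFmono : Monotone F)
    (hFpos : ∀ x, 0 < x → 0 < F x)
    (hFlt1 : ∀ x, 0 < x → F x < 1)
    (hFle : ∀ x, F x ≤ 1)
    (hF1 : ∀ x, Fn 1 x = F x)
    (hf1 : ∀ x, fn 1 x = f x)
    (hFrec : ∀ n, 1 ≤ n → ∀ x, Fn (n + 1) x = Fn n x * (1 + (-Real.log (Fn n x))))
    (hfrec : ∀ n, 1 ≤ n → ∀ x, fn (n + 1) x = (-Real.log (Fn n x)) * fn n x) :
    ∀ n, 1 ≤ n →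
      (∀ x, 0 < x →
          (fn (n + 1) x / Fn (n + 1) x) / (fn n x / Fn n x)
            = (-Real.log (Fn n x)) / (1 + (-Real.log (Fn n x))))
      ∧ AntitoneOn
          (fun x => (fn (n + 1) x / Fn (n + 1) x) / (fn n x / Fn n x)) (Ioi 0) := by
  -- Key invariant by induction
  have key : ∀ n, 1 ≤ n → (∀ x, 0 < x → 0 < Fn n x ∧ Fn n x < 1 ∧ 0 < fn n x)
      ∧ MonotoneOn (Fn n) (Ioi 0) := by
    intro n hn
    induction n with
    | zero => omega
    | succ m ih =>
      rcases Nat.eq_or_lt_of_le hn with h1 | h1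
      · constructor
        · intro x hx
          rw [← h1, hF1, hf1]
          exact ⟨hFpos x hx, hFlt1 x hx, hfpos x hx⟩
        · intro a ha b hb hab
          rw [← h1, hF1, hF1]
          exact hFmono hab
      · have hm : 1 ≤ m := by omega
        obtain ⟨ihpos, ihmono⟩ := ih hm
        have hT : ∀ x, 0 < x → 0 < -Real.log (Fn m x) := by
          intro x hx
          obtain ⟨h0, h1', _⟩ := ihpos x hx
          simp only [neg_pos]
          exact Real.log_neg h0 h1'
        constructor
        · intro x hx
          obtain ⟨h0, h1', hf'⟩ := ihpos x hx
          have hTx := hT x hx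
          refine ⟨?_, ?_, ?_⟩
          · rw [hFrec m hm]
            positivity
          · rw [hFrec m hm]
            have := g_mono (a := Fn m x) (b := 1) ⟨h0, h1'.le⟩ ⟨one_pos, le_refl 1⟩ h1'.le
            simp only [Real.log_one, sub_zero, mul_one] at this
            have hlt := Real.add_one_lt_exp (ne_of_gt hTx)
            have hexp : Fn m x * Real.exp (-Real.log (Fn m x)) = 1 := by
              rw [Real.exp_neg, Real.exp_log h0]
              field_simp
            nlinarith [mul_lt_mul_of_pos_left hlt h0]
          · rw [hfrec m hm]
            exact mul_pos hTx hf'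
        · intro a ha b hb hab
          rw [hFrec m hm, hFrec m hm]
          obtain ⟨ha0, ha1, _⟩ := ihpos a ha
          obtain ⟨hb0, hb1, _⟩ := ihpos b hb
          have := g_mono (a := Fn m a) (b := Fn m b) ⟨ha0, ha1.le⟩ ⟨hb0, hb1.le⟩
            (ihmono ha hb hab)
          have h2 : Fn m a * (1 + -Real.log (Fn m a)) = Fn m a * (1 - Real.log (Fn m a)) := by ring
          have h3 : Fn m b * (1 + -Real.log (Fn m b)) = Fn m b * (1 - Real.log (Fn m b)) := by ring
          rw [h2, h3]; exact this
  intro n hn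
  obtain ⟨hpos, hmono⟩ := key n hn
  have hT : ∀ x, 0 < x → 0 < -Real.log (Fn n x) := by
    intro x hx
    obtain ⟨h0, h1', _⟩ := hpos x hx
    simp only [neg_pos]
    exact Real.log_neg h0 h1'
  have heq : ∀ x, 0 < x →
      (fn (n + 1) x / Fn (n + 1) x) / (fn n x / Fn n x)
        = (-Real.log (Fn n x)) / (1 + (-Real.log (Fn n x))) := by
    intro x hx
    obtain ⟨h0, h1', hf'⟩ := hpos x hx
    have hTx := hT x hx
    rw [hFrec n hn, hfrec n hn]
    have h1T : (0:ℝ) < 1 + -Real.log (Fn n x) := by linarith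
    field_simp
  refine ⟨heq, ?_⟩
  intro a ha b hb hab
  simp only
  rw [heq a ha, heq b hb]
  have hTa := hT a ha
  have hTb := hT b hb
  have hle : -Real.log (Fn n b) ≤ -Real.log (Fn n a) := by
    have := Real.log_le_log (hpos a ha).1 (hmono ha hb hab)
    linarith
  rw [div_le_div_iff₀ (by linarith) (by linarith)]
  nlinarith
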